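/- Let G be a finite group, R = ℤG, and M a ℤG-module with G-invariant symplectic form and associated R-valued skew-hermitian form ⟨·,·⟩. Suppose a ∈ M is R-isotropic and D is the G-equivariant transformation x ↦ x + ∑_{g∈G}(x · g(1−h)a)·g(1−h)a for some h ∈ G, where (1−h)a = a − ha. Then D = T_a(2 − e_h − e_h†), i.e., D(x) = x + ⟨x,a⟩(2 − e_h − e_{h^{-1}})a for all x ∈ M. -/

import Mathlib

/-- The `ℤG`-valued form `⟨a,b⟩ = ∑_{g∈G} (g⁻¹a · b) e_g`. -/
noncomputable def eqForm {G M : Type*} [Group G] [Fintype G] [AddCommGroup M]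
    [DistribMulAction G M] (B : M → M → ℤ) (a b : M) : MonoidAlgebra ℤ G :=
  ∑ g : G, MonoidAlgebra.single g (B (g⁻¹ • a) b)

/-- The action of an element `s = ∑ s_g e_g` of `ℤG` on `m ∈ M`: `∑ s_g (g • m)`. -/
noncomputable def gact {G M : Type*} [Group G] [Fintype G] [AddCommGroup M]
    [DistribMulAction G M] (s : MonoidAlgebra ℤ G) (m : M) : M :=
  ∑ g : G, (s.coeff g) • (g • m)

lemma eqForm_apply {G M : Type*} [Group G] [Fintype G] [AddCommGroup M]
    [DistribMulAction G M] (B : M → M → ℤ) (a b : M) (g : G) :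
    (eqForm (G := G) B a b).coeff g = B (g⁻¹ • a) b := by
  unfold eqForm
  rw [MonoidAlgebra.coeff_sum, Finset.sum_apply']
  rw [Finset.sum_eq_single g]
  · simp [MonoidAlgebra.coeff_single, Finsupp.single_apply]
  · intro b' _ hb'
    simp [MonoidAlgebra.coeff_single, Finsupp.single_apply, hb']
  · simp

/-- Homological action of the equivariant multi-Dehn twist: if `a` is
`R`-isotropic and `h ∈ G`, then the `G`-equivariant transformation
`D : x ↦ x + ∑_{g∈G} (x · g(1−h)a) · g(1−h)a` (where `(1−h)a = a − h•a`)
equals `T_a(2 − e_h − e_h†)`, i.e.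
`D(x) = x + ⟨x,a⟩(2 − e_h − e_{h⁻¹})a` for all `x ∈ M`. -/
theorem stmt_15 {G M : Type*} [Group G] [Fintype G] [AddCommGroup M]
    [Module.Free ℤ M] [Module.Finite ℤ M] [DistribMulAction G M]
    (B : M → M → ℤ)
    (haddl : ∀ a a' b : M, B (a + a') b = B a b + B a' b)
    (haddr : ∀ a b b' : M, B a (b + b') = B a b + B a b')
    (halt : ∀ a : M, B a a = 0)
    (hnd : ∀ a : M, (∀ b : M, B a b = 0) → a = 0)
    (hG : ∀ (g : G) (a b : M), B (g • a) (g • b) = B a b)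
    (a : M) (ha : eqForm (G := G) B a a = 0) (h : G) :
    ∀ x : M,
      x + ∑ g : G, (B x (g • (a - h • a))) • (g • (a - h • a))
        = x + gact (eqForm (G := G) B x a *
            (2 - MonoidAlgebra.single h 1 - MonoidAlgebra.single h⁻¹ 1)) a := by
  intro x
  set c : G → ℤ := fun g => B x (g • a) with hc
  set s := eqForm (G := G) B x a with hsdef
  -- coefficients of s
  have hs : ∀ u : G, s.coeff u = c u := by
    intro u
    rw [hsdef, eqForm_apply]
    have := hG u (u⁻¹ • x) a
    rw [smul_inv_smul] at this
    rw [← this, hc]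
  -- B is subtractive in the right slot
  have hsubr : ∀ p q r : M, B p (q - r) = B p q - B p r := by
    intro p q r
    have := haddr p r (q - r)
    rw [add_sub_cancel] at this
    omega
  -- coefficients of the product
  have hcoef : ∀ g : G, ((s * (2 - MonoidAlgebra.single h 1 - MonoidAlgebra.single h⁻¹ 1) :
        MonoidAlgebra ℤ G)).coeff g
      = c g + c g - c (g * h⁻¹) - c (g * h) := by
    intro g
    rw [mul_sub, mul_sub, MonoidAlgebra.coeff_sub, MonoidAlgebra.coeff_sub, Finsupp.sub_apply, Finsupp.sub_apply,
      MonoidAlgebra.coeff_mul_single_apply, MonoidAlgebra.coeff_mul_single_apply, inv_inv, mul_two,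
      MonoidAlgebra.coeff_add, Finsupp.add_apply, hs, hs, hs, mul_one, mul_one]
  congr 1
  -- rewrite LHS terms
  have lhs_eq : ∀ g : G, (B x (g • (a - h • a))) • (g • (a - h • a))
      = (c g • (g • a) + c (g * h) • ((g * h) • a))
        - (c g • ((g * h) • a) + c (g * h) • (g • a)) := by
    intro g
    have h1 : g • (a - h • a) = g • a - (g * h) • a := by
      rw [smul_sub, mul_smul]
    rw [h1, hsubr, sub_smul, smul_sub, smul_sub, hc]
    simp only [mul_smul]
    abel
  rw [Finset.sum_congr rfl (fun g _ => lhs_eq g)]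
  have rhs_eq : ∀ g : G,
      ((s * (2 - MonoidAlgebra.single h 1 - MonoidAlgebra.single h⁻¹ 1) :
        MonoidAlgebra ℤ G)).coeff g • (g • a)
      = (c g • (g • a) + c g • (g • a)) - (c (g * h⁻¹) • (g • a) + c (g * h) • (g • a)) := by
    intro g
    rw [hcoef]
    rw [sub_smul, sub_smul, add_smul]
    abel
  unfold gact
  rw [Finset.sum_congr rfl (fun g _ => rhs_eq g)]
  rw [Finset.sum_sub_distrib, Finset.sum_sub_distrib,
    Finset.sum_add_distrib, Finset.sum_add_distrib, Finset.sum_add_distrib,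
    Finset.sum_add_distrib]
  -- reindex: ∑ c(g*h) • ((g*h)•a) = ∑ c g • (g•a)
  have r1 : ∑ g : G, c (g * h) • ((g * h) • a) = ∑ g : G, c g • (g • a) :=
    Fintype.sum_equiv (Equiv.mulRight h) _ _ (fun g => rfl)
  -- reindex: ∑ c(g*h⁻¹) • (g•a) = ∑ c g • ((g*h)•a)
  have r2 : ∑ g : G, c (g * h⁻¹) • (g • a) = ∑ g : G, c g • ((g * h) • a) := by
    refine Fintype.sum_equiv (Equiv.mulRight h⁻¹) _ _ (fun g => ?_)
    simp [Equiv.coe_mulRight, inv_mul_cancel_right]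
  rw [r1, r2]
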